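/- Let f ∈ U_i(n,q) be an eigenfunction of H(n,q) for eigenvalue n(q-1)-qi, let 1 ≤ r ≤ n and k,m ∈ Σ_q. Then the function f_k^r - f_m^r on Σ_q^{n-1} obtained by restricting f to the hyperplanes x_r = k and x_r = m and subtracting, lies in U_{i-1}(n-1,q), i.e., satisfies the eigenfunction equation for eigenvalue (n-1)(q-1)-q(i-1) on H(n-1,q). -/

import Mathlib

/-- Sum of `f` over the neighbors of `x` in the Hamming graph `H(n,q)`. -/
noncomputable def adjSum (n q : ℕ) (f : (Fin n → Fin q) → ℝ) (x : Fin n → Fin q) : ℝ :=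
  ∑ y : Fin n → Fin q, if hammingDist x y = 1 then f y else 0

/-- `f` satisfies the eigenfunction equation for eigenvalue `lam` on `H(n,q)`. -/
def IsEigenfun (n q : ℕ) (lam : ℝ) (f : (Fin n → Fin q) → ℝ) : Prop :=
  ∀ x, adjSum n q f x = lam * f x

/-- `f ∈ U_i(n,q)`, the eigenspace for eigenvalue `n(q-1) - q i`. -/
def memU (n q i : ℕ) (f : (Fin n → Fin q) → ℝ) : Prop :=
  IsEigenfun n q ((n : ℝ) * ((q : ℝ) - 1) - (q : ℝ) * (i : ℝ)) f

/-- `f ∈ U_{[i,j]}(n,q) = U_i ⊕ ⋯ ⊕ U_j`. -/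
def memUI (n q i j : ℕ) (f : (Fin n → Fin q) → ℝ) : Prop :=
  ∃ g : ℕ → (Fin n → Fin q) → ℝ,
    (∀ t ∈ Finset.Icc i j, memU n q t (g t)) ∧ f = ∑ t ∈ Finset.Icc i j, g t

/-- The cardinality of the support of `f : Σ_q^n → ℝ`. -/
noncomputable def suppCard (n q : ℕ) (f : (Fin n → Fin q) → ℝ) : ℕ :=
  Nat.card {x : Fin n → Fin q // f x ≠ 0}

lemma hammingDist_insertNth (n q : ℕ) (r : Fin (n + 1)) (k j : Fin q)
    (y z : Fin n → Fin q) :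
    hammingDist (r.insertNth k y : Fin (n+1) → Fin q) (r.insertNth j z)
      = (if k = j then 0 else 1) + hammingDist y z := by
  simp only [hammingDist, Finset.card_filter]
  rw [Fin.sum_univ_succAbove _ r]
  simp [Fin.insertNth_apply_succAbove, ite_not]

lemma adjSum_sub (n q : ℕ) (f g : (Fin n → Fin q) → ℝ) (x : Fin n → Fin q) :
    adjSum n q (fun y => f y - g y) x = adjSum n q f x - adjSum n q g x := by
  unfold adjSum
  rw [← Finset.sum_sub_distrib]
  exact Finset.sum_congr rfl fun y _ => by split <;> simp

lemma adjSum_insertNth (n q : ℕ) (f : (Fin (n + 1) → Fin q) → ℝ)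
    (r : Fin (n + 1)) (k : Fin q) (y : Fin n → Fin q) :
    adjSum (n + 1) q f (r.insertNth k y)
      = (∑ j : Fin q, f (r.insertNth j y)) - f (r.insertNth k y)
        + adjSum n q (fun z => f (r.insertNth k z)) y := by
  unfold adjSum
  rw [← Equiv.sum_comp (Fin.insertNthEquiv (fun _ => Fin q) r), Fintype.sum_prod_type]
  simp only [Fin.insertNthEquiv, Equiv.coe_fn_mk]
  show (∑ x : Fin q, ∑ z : Fin n → Fin q,
      if hammingDist (r.insertNth k y : Fin (n+1) → Fin q) (r.insertNth x z) = 1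
        then f (r.insertNth x z) else 0) = _
  have key : ∀ j : Fin q,
      (∑ z : Fin n → Fin q,
        if hammingDist (r.insertNth k y : Fin (n+1) → Fin q) (r.insertNth j z) = 1
          then f (r.insertNth j z) else 0)
      = if j = k then ∑ z : Fin n → Fin q,
          if hammingDist y z = 1 then f (r.insertNth k z) else 0
        else f (r.insertNth j y) := by
    intro j
    by_cases hj : j = k
    · subst hj
      simp [hammingDist_insertNth]
    · rw [if_neg hj]
      have h1 : ∀ z : Fin n → Fin q,
          (if hammingDist (r.insertNth k y : Fin (n+1) → Fin q) (r.insertNth j z) = 1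
            then f (r.insertNth j z) else 0)
          = if y = z then f (r.insertNth j z) else 0 := by
        intro z
        have hkj : ¬ (k = j) := fun h => hj h.symm
        rw [hammingDist_insertNth, if_neg hkj]
        by_cases hz : y = z
        · subst hz; simp
        · rw [if_neg hz, if_neg]
          intro h
          exact hz (eq_of_hammingDist_eq_zero (by omega))
      rw [Finset.sum_congr rfl fun z _ => h1 z, Finset.sum_ite_eq]
      simp
  rw [Finset.sum_congr rfl fun j _ => key j,
    ← Finset.add_sum_erase _ _ (Finset.mem_univ k), if_pos rfl]
  have h2 : (∑ j ∈ Finset.univ.erase k,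
      if j = k then (∑ z : Fin n → Fin q,
          if hammingDist y z = 1 then f (r.insertNth k z) else 0)
        else f (r.insertNth j y))
      = ∑ j ∈ Finset.univ.erase k, f (r.insertNth j y) :=
    Finset.sum_congr rfl fun j hj => if_neg (Finset.ne_of_mem_erase hj)
  rw [h2, Finset.sum_erase_eq_sub (Finset.mem_univ k)]
  ring

/-- for f ∈ U_i(n+1,q), the difference of restrictions
`f_k^r - f_m^r` lies in U_{i-1}(n,q). -/
theorem restriction_diff_memU (n q i : ℕ) (f : (Fin (n + 1) → Fin q) → ℝ)
    (hf : memU (n + 1) q i f) (r : Fin (n + 1)) (k m : Fin q) :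
    IsEigenfun n q ((n : ℝ) * ((q : ℝ) - 1) - (q : ℝ) * ((i : ℝ) - 1))
      (fun y => f (r.insertNth k y) - f (r.insertNth m y)) := by
  intro y
  have hk := hf (r.insertNth k y)
  have hm := hf (r.insertNth m y)
  rw [adjSum_insertNth] at hk hm
  rw [adjSum_sub]
  have ek : adjSum n q (fun z => f (r.insertNth k z)) y
      = (((n : ℝ) + 1) * ((q : ℝ) - 1) - (q : ℝ) * (i : ℝ)) * f (r.insertNth k y)
        + f (r.insertNth k y) - ∑ j : Fin q, f (r.insertNth j y) := by
    push_cast at hk; linarith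
  have em : adjSum n q (fun z => f (r.insertNth m z)) y
      = (((n : ℝ) + 1) * ((q : ℝ) - 1) - (q : ℝ) * (i : ℝ)) * f (r.insertNth m y)
        + f (r.insertNth m y) - ∑ j : Fin q, f (r.insertNth j y) := by
    push_cast at hm; linarith
  rw [ek, em]; ring
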